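/- Let D be a cocomplete, well-powered abelian category and let E ⊆ D be a full subcategory closed under subobjects, quotient objects, and small coproducts (taken in D). Then the inclusion functor E → D has a right adjoint, which sends an object M of D to its largest subobject belonging to E. -/

import Mathlib

open CategoryTheory CategoryTheory.Limits

universe v u

/-- Let `D` be a cocomplete, well-powered abelian category and `E ⊆ D` a full subcategory
closed under subobjects, quotients and small coproducts.  Then the inclusion `E ⥤ D` has a
right adjoint, sending an object `M` to its largest subobject belonging to `E`. -/
theorem stmt4 {D : Type u} [Category.{v} D] [Abelian D] [HasColimits D] [WellPowered.{v} D]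
    (P : D → Prop)
    (hsub : ∀ (X Y : D) (f : X ⟶ Y), Mono f → P Y → P X)
    (hquot : ∀ (X Y : D) (f : X ⟶ Y), Epi f → P X → P Y)
    (hcoprod : ∀ (ι : Type v) (X : ι → D), (∀ i, P (X i)) → P (∐ X)) :
    ∃ (R : D ⥤ ObjectProperty.FullSubcategory P) (adj : ObjectProperty.ι P ⊣ R),
      ∀ M : D, Mono (adj.counit.app M) ∧
        ∀ (S : D) (f : S ⟶ M), P S → Mono f →
          ∃ g : S ⟶ (R.obj M).obj, g ≫ adj.counit.app M = f := by
  classical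
  -- index type of subobjects of `M` lying in `E`
  let idx : D → Type v := fun M => Shrink.{v} {S : Subobject M // P ((S : D))}
  let F : ∀ M : D, idx M → D := fun M i => ((((equivShrink _).symm i : {S : Subobject M // P ((S : D))}).val : D))
  let big : ∀ M : D, (∐ F M) ⟶ M := fun M =>
    Sigma.desc fun i => ((equivShrink _).symm i : {S : Subobject M // P ((S : D))}).val.arrow
  -- the candidate largest subobject in `E`
  let T : D → D := fun M => image (big M)
  have hPT : ∀ M, P (T M) := fun M =>
    hquot _ _ (factorThruImage (big M)) inferInstance
      (hcoprod _ _ fun i => ((equivShrink _).symm i : {S : Subobject M // P ((S : D))}).property)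
  -- every subobject of `M` lying in `E` factors through `T M`
  have claim : ∀ (M : D) (j : {S : Subobject M // P ((S : D))}),
      ∃ g : ((j.val : D)) ⟶ T M, g ≫ image.ι (big M) = j.val.arrow := by
    intro M j
    obtain ⟨j', rfl⟩ : ∃ j' : idx M, ((equivShrink _).symm j' : {S : Subobject M // P ((S : D))}) = j :=
      (equivShrink _).symm.surjective j
    exact ⟨Sigma.ι (F M) j' ≫ factorThruImage (big M), by simp [big]⟩
  have factorMono : ∀ (M X : D) (f : X ⟶ M), Mono f → P X →
      ∃ g : X ⟶ T M, g ≫ image.ι (big M) = f := by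
    intro M X f hm hX
    haveI := hm
    have hPmk : P ((Subobject.mk f : D)) :=
      hsub _ _ (Subobject.underlyingIso f).hom inferInstance hX
    obtain ⟨g, hg⟩ := claim M ⟨Subobject.mk f, hPmk⟩
    exact ⟨(Subobject.underlyingIso f).inv ≫ g, by
      rw [Category.assoc, hg, Subobject.underlyingIso_arrow]⟩
  have factor : ∀ (M X : D) (f : X ⟶ M), P X →
      ∃ g : X ⟶ T M, g ≫ image.ι (big M) = f := by
    intro M X f hX
    have hPim : P (image f) := hquot _ _ (factorThruImage f) inferInstance hX
    obtain ⟨g, hg⟩ := factorMono M (image f) (image.ι f) inferInstance hPim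
    exact ⟨factorThruImage f ≫ g, by rw [Category.assoc, hg, image.fac]⟩
  -- hom-set bijection
  let Tobj : D → ObjectProperty.FullSubcategory P := fun M => ⟨T M, hPT M⟩
  let e : ∀ (X : ObjectProperty.FullSubcategory P) (M : D),
      ((ObjectProperty.ι P).obj X ⟶ M) ≃ (X ⟶ Tobj M) := fun X M =>
    { toFun := fun f => ObjectProperty.homMk (Classical.choose (factor M X.obj f X.property))
      invFun := fun g => g.hom ≫ image.ι (big M)
      left_inv := fun f => Classical.choose_spec (factor M X.obj f X.property)
      right_inv := fun g => by
        have h1 := Classical.choose_spec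
          (factor M X.obj (g.hom ≫ image.ι (big M)) X.property)
        exact ObjectProperty.hom_ext (h := (cancel_mono (image.ι (big M))).mp h1) }
  have he : ∀ (X' X : ObjectProperty.FullSubcategory P) (M : D) (f : X' ⟶ X)
      (g : (ObjectProperty.ι P).obj X ⟶ M),
      e X' M ((ObjectProperty.ι P).map f ≫ g) = f ≫ e X M g := by
    intro X' X M f g
    have key : ∀ (Z : ObjectProperty.FullSubcategory P) (h : Z.obj ⟶ M),
        (Classical.choose (factor M Z.obj h Z.property)) ≫ image.ι (big M) = h :=
      fun Z h => Classical.choose_spec (factor M Z.obj h Z.property)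
    apply ObjectProperty.hom_ext
    apply (cancel_mono (image.ι (big M))).mp
    show Classical.choose
        (factor M X'.obj ((ObjectProperty.ι P).map f ≫ g) X'.property) ≫
      image.ι (big M) = _
    rw [key X' ((ObjectProperty.ι P).map f ≫ g)]
    show _ = ((ObjectProperty.ι P).map f ≫
        Classical.choose (factor M X.obj g X.property)) ≫ image.ι (big M)
    rw [Category.assoc, key X g]
  refine ⟨Adjunction.rightAdjointOfEquiv e he, Adjunction.adjunctionOfEquivRight e he, ?_⟩
  intro M
  have hcounit : (Adjunction.adjunctionOfEquivRight e he).counit.app M = image.ι (big M) := by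
    show ((e (Tobj M) M).symm (𝟙 (Tobj M))) = _
    simp only [e, Equiv.coe_fn_symm_mk]
    exact Category.id_comp _
  constructor
  · rw [hcounit]; infer_instance
  · intro S f hPS hm
    obtain ⟨g, hg⟩ := factorMono M S f hm hPS
    exact ⟨g, by rw [hcounit]; exact hg⟩
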